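/- Let σ_c > 0 and δ_u > 0, let g be the undamaged cohesive potential, and let F : ℝ → ℝ be differentiable at 0 with F′(0) > −σ_c. Then δ = 0 is a strict local minimizer of the function δ ↦ F(δ) + g(δ) on [0, ∞); that is, there exists ε > 0 such that F(δ) + g(δ) > F(0) + g(0) for all δ ∈ (0, ε). In particular, no opening of the interface occurs until the magnitude of the driving energy-release slope −F′(0) reaches the critical traction σ_c. -/

import Mathlib

/-- Initially rigid behavior: if the smooth part `F` of the energy satisfies
`F′(0) > -σ_c`, then `δ = 0` is a strict local minimizer of `F + g` on `[0,∞)`,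
so no opening occurs until the driving slope reaches the critical traction. -/
theorem stmt_14 (σc δu : ℝ) (hσ : 0 < σc) (hδ : 0 < δu)
    (g : ℝ → ℝ)
    (hg : ∀ δ, g δ = if δ ≤ δu then σc * δ + (-(σc / (2 * δu))) * δ ^ 2
      else σc * δu + (-(σc / (2 * δu))) * δu ^ 2)
    (F : ℝ → ℝ) (hF : DifferentiableAt ℝ F 0) (hF' : -σc < deriv F 0) :
    ∃ ε > 0, ∀ δ ∈ Set.Ioo 0 ε, F 0 + g 0 < F δ + g δ := by
  set h : ℝ → ℝ := fun δ => F δ + g δ with hh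
  set d : ℝ := deriv F 0 + σc with hd
  have hdpos : 0 < d := by linarith
  -- g agrees with the polynomial near 0
  have hpoly : HasDerivAt (fun δ : ℝ => σc * δ + (-(σc / (2 * δu))) * δ ^ 2) σc 0 := by
    have h1 : HasDerivAt (fun δ : ℝ => σc * δ) σc 0 := by
      simpa using (hasDerivAt_id (0:ℝ)).const_mul σc
    have h2 : HasDerivAt (fun δ : ℝ => (-(σc / (2 * δu))) * δ ^ 2)
        ((-(σc / (2 * δu))) * (2 * 0 ^ 1)) 0 := by
      simpa using ((hasDerivAt_pow 2 (0:ℝ)).const_mul (-(σc / (2 * δu))))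
    have h3 : HasDerivAt (fun δ : ℝ => σc * δ + (-(σc / (2 * δu))) * δ ^ 2)
        (σc + (-(σc / (2 * δu))) * (2 * 0 ^ 1)) 0 := h1.add h2
    simpa using h3
  have hgd : HasDerivAt g σc 0 := by
    apply hpoly.congr_of_eventuallyEq
    have hmem : Set.Iio δu ∈ nhds (0:ℝ) := Iio_mem_nhds hδ
    filter_upwards [hmem] with x hx
    rw [hg x, if_pos (le_of_lt hx)]
  have hhd : HasDerivAt h d 0 := hF.hasDerivAt.add hgd
  have hslope := hasDerivAt_iff_tendsto_slope.mp hhd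
  have hev : ∀ᶠ x in nhdsWithin (0:ℝ) {(0:ℝ)}ᶜ, 0 < slope h 0 x :=
    hslope.eventually (eventually_gt_nhds hdpos)
  have hev' : ∀ᶠ x in nhdsWithin (0:ℝ) (Set.Ioi 0), 0 < slope h 0 x :=
    hev.filter_mono (nhdsWithin_mono _ (fun x hx => ne_of_gt hx))
  rw [eventually_nhdsWithin_iff] at hev'
  rcases Metric.eventually_nhds_iff.mp hev' with ⟨ε, hε, hball⟩
  refine ⟨ε, hε, fun δ hδ' => ?_⟩
  have hball' : 0 < slope h 0 δ := by
    apply hball (y := δ) ?_ hδ'.1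
    simpa [abs_of_pos hδ'.1] using hδ'.2
  have : 0 < (h δ - h 0) / δ := by simpa [slope_def_field, div_eq_inv_mul] using hball'
  have := (div_pos_iff.mp this)
  rcases this with ⟨h1, _⟩ | ⟨_, h2⟩
  · simpa [hh] using (by linarith : h 0 < h δ)
  · linarith [hδ'.1]
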